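/- Let a, b > 0, ν ∈ (0,1), n ≥ 1, h = b/a, with K, m_k, r_k as usual, and Heinz mean H_μ(a,b) = (a^(1-μ)b^μ + a^μ b^(1-μ))/2. Then (a+b)/2 ≤ K(h^(1/2ⁿ))^{-r_n} H_ν(a,b) + (√a − √b)² − Σ_{k=0}^{n-1} r_k [ H_{m_k/2^k}(a,b) − 2H_{(2m_k+1)/2^{k+1}}(a,b) + H_{(m_k+1)/2^k}(a,b) ]. -/

import Mathlib

open Real Finset

noncomputable def Kc (t : ℝ) : ℝ := (1 + t)^2 / (4 * t)

noncomputable def rseq (ν : ℝ) : ℕ → ℝ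
  | 0 => min ν (1 - ν)
  | k + 1 => min (2 * rseq ν k) (1 - 2 * rseq ν k)

noncomputable def mfl (ν : ℝ) (k : ℕ) : ℝ := ⌊(2:ℝ)^k * ν⌋

noncomputable def fw (x y s : ℝ) : ℝ := x ^ (1 - s) * y ^ s

noncomputable def YB (x y m : ℝ) (k : ℕ) : ℝ :=
  fw x y (m / 2^k) - 2 * fw x y ((2*m+1)/2^(k+1)) + fw x y ((m+1)/2^k)

lemma Kc_pos {t : ℝ} (ht : 0 < t) : 0 < Kc t := by
  unfold Kc; positivity

lemma Kc_inv {t : ℝ} (ht : 0 < t) : Kc t⁻¹ = Kc t := by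
  unfold Kc; field_simp; ring

lemma rseq_one (k : ℕ) : rseq 1 k = 0 := by
  induction k with
  | zero => simp [rseq]
  | succ k ih => simp [rseq, ih]

lemma rseq_double {μ : ℝ} (h0 : 0 ≤ μ) (h : μ ≤ 1/2) (k : ℕ) :
    rseq μ (k+1) = rseq (2*μ) k := by
  induction k with
  | zero =>
    show min (2 * rseq μ 0) (1 - 2 * rseq μ 0) = min (2*μ) (1 - (2*μ))
    have : rseq μ 0 = μ := min_eq_left (by linarith)
    rw [this]
  | succ k ih =>
    show min (2 * rseq μ (k+1)) (1 - 2 * rseq μ (k+1)) = _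
    rw [ih]; rfl

lemma rseq_double' {μ : ℝ} (h : 1/2 ≤ μ) (h1 : μ ≤ 1) (k : ℕ) :
    rseq μ (k+1) = rseq (2*μ-1) k := by
  induction k with
  | zero =>
    show min (2 * rseq μ 0) (1 - 2 * rseq μ 0) = min (2*μ-1) (1 - (2*μ-1))
    have : rseq μ 0 = 1 - μ := min_eq_right (by linarith)
    rw [this, min_comm]
    congr 1 <;> ring
  | succ k ih =>
    show min (2 * rseq μ (k+1)) (1 - 2 * rseq μ (k+1)) = _
    rw [ih]; rfl

lemma rseq_mem {μ : ℝ} (h0 : 0 ≤ μ) (h1 : μ ≤ 1) (k : ℕ) :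
    0 ≤ rseq μ k ∧ rseq μ k ≤ 1/2 := by
  induction k with
  | zero =>
    constructor
    · exact le_min (by linarith) (by linarith)
    · rcases le_total μ (1-μ) with hc | hc
      · show min _ _ ≤ _; rw [min_eq_left hc]; linarith
      · show min _ _ ≤ _; rw [min_eq_right hc]; linarith
  | succ k ih =>
    obtain ⟨ih0, ih1⟩ := ih
    rcases le_total (2 * rseq μ k) (1 - 2 * rseq μ k) with hc | hc
    · constructor
      · show 0 ≤ min _ _; rw [min_eq_left hc]; linarith
      · show min _ _ ≤ _; rw [min_eq_left hc]; linarith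
    · constructor
      · show 0 ≤ min _ _; rw [min_eq_right hc]; linarith
      · show min _ _ ≤ _; rw [min_eq_right hc]; linarith

lemma rseq_nonneg {μ : ℝ} (h0 : 0 ≤ μ) (h1 : μ ≤ 1) (k : ℕ) : 0 ≤ rseq μ k :=
  (rseq_mem h0 h1 k).1
lemma mfl_double (μ : ℝ) (k : ℕ) : mfl (2*μ) k = mfl μ (k+1) := by
  unfold mfl; congr 2; ring

lemma mfl_double' (μ : ℝ) (k : ℕ) : mfl (2*μ-1) k = mfl μ (k+1) - 2^k := by
  unfold mfl
  have h : (2:ℝ)^k * (2*μ-1) = (2:ℝ)^(k+1) * μ - ((2^k : ℤ) : ℝ) := by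
    push_cast; ring
  rw [h, Int.floor_sub_intCast]
  push_cast; ring

lemma fw_pos {x y : ℝ} (hx : 0 < x) (hy : 0 < y) (s : ℝ) : 0 < fw x y s := by
  unfold fw; positivity

lemma fw_half {x y : ℝ} (hx : 0 < x) (hy : 0 < y) (s : ℝ) :
    fw x ((x*y)^((1:ℝ)/2)) s = fw x y (s/2) := by
  unfold fw
  rw [← Real.rpow_mul (by positivity : (0:ℝ) ≤ x*y), Real.mul_rpow hx.le hy.le,
    ← mul_assoc, ← Real.rpow_add hx, show 1 - s + 1/2*s = 1 - s/2 by ring,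
    show (1:ℝ)/2*s = s/2 by ring]

lemma fw_shift {x y : ℝ} (hx : 0 < x) (hy : 0 < y) (s : ℝ) :
    fw ((x*y)^((1:ℝ)/2)) y s = fw x y ((s+1)/2) := by
  unfold fw
  rw [← Real.rpow_mul (by positivity : (0:ℝ) ≤ x*y), Real.mul_rpow hx.le hy.le,
    mul_assoc, ← Real.rpow_add hy, show (1:ℝ)/2*(1-s) + s = (s+1)/2 by ring,
    show (1:ℝ)/2*(1-s) = 1 - (s+1)/2 by ring]

lemma YB_half {x y : ℝ} (hx : 0 < x) (hy : 0 < y) (m : ℝ) (k : ℕ) :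
    YB x ((x*y)^((1:ℝ)/2)) m k = YB x y m (k+1) := by
  have e : ∀ c : ℝ, ∀ j : ℕ, c/2^j/2 = c/2^(j+1) := by
    intro c j; rw [div_div, pow_succ]
  unfold YB
  rw [fw_half hx hy, fw_half hx hy, fw_half hx hy, e, e, e]

lemma YB_shift {x y : ℝ} (hx : 0 < x) (hy : 0 < y) (m : ℝ) (k : ℕ) :
    YB ((x*y)^((1:ℝ)/2)) y m k = YB x y (m + 2^k) (k+1) := by
  have h2 : ((2:ℝ)^k) ≠ 0 := by positivity
  have e1 : (m/2^k + 1)/2 = (m + 2^k)/2^(k+1) := by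
    rw [pow_succ]; field_simp; try ring
  have e2 : ((2*m+1)/2^(k+1) + 1)/2 = (2*(m + 2^k)+1)/2^(k+1+1) := by
    rw [pow_succ (2:ℝ) (k+1), pow_succ (2:ℝ) k]; field_simp; try ring
  have e3 : ((m+1)/2^k + 1)/2 = ((m + 2^k)+1)/2^(k+1) := by
    rw [pow_succ]; field_simp; try ring
  unfold YB
  rw [fw_shift hx hy, fw_shift hx hy, fw_shift hx hy, e1, e2, e3]

lemma base_half {x y : ℝ} (μ : ℝ) (hx : 0 < x) (hy : 0 < y) (h0 : 0 ≤ μ) (h2 : μ ≤ 1/2) :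
    Kc (y/x) ^ μ * fw x y μ ≤ (1-μ)*x + μ*y := by
  set h := y/x with hdef
  have hh : 0 < h := by positivity
  have key : ((1+h)/2) ^ (2*μ) ≤ 1 - μ + μ*h := by
    have hg := Real.geom_mean_le_arith_mean2_weighted (w₁ := 1-2*μ) (w₂ := 2*μ)
      (p₁ := 1) (p₂ := (1+h)/2) (by linarith) (by linarith) zero_le_one
      (by positivity) (by ring)
    rw [Real.one_rpow, one_mul] at hg
    have : 2*μ*((1+h)/2) = μ + μ*h := by ring
    linarith
  have hy' : y = h*x := by rw [hdef]; field_simp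
  have lhs_eq : Kc h ^ μ * fw x y μ = ((1+h)/2)^(2*μ) * x := by
    unfold fw
    rw [hy', Real.mul_rpow hh.le hx.le]
    have e1 : x ^ (1-μ) * (h^μ * x^μ) = h^μ * x := by
      rw [mul_comm (h^μ) (x^μ), ← mul_assoc, ← Real.rpow_add hx,
        show 1-μ+μ = (1:ℝ) by ring, Real.rpow_one]; ring
    rw [e1, ← mul_assoc, ← Real.mul_rpow (Kc_pos hh).le hh.le,
      show Kc h * h = ((1+h)/2)^(2:ℕ) by unfold Kc; field_simp; ring,
      ← Real.rpow_natCast ((1+h)/2) 2, ← Real.rpow_mul (by positivity)]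
    norm_num
  rw [lhs_eq, hy']
  calc ((1+h)/2)^(2*μ) * x ≤ (1 - μ + μ*h) * x :=
        mul_le_mul_of_nonneg_right key hx.le
    _ = (1-μ)*x + μ*(h*x) := by ring

lemma base {x y : ℝ} (μ : ℝ) (hx : 0 < x) (hy : 0 < y) (h0 : 0 ≤ μ) (h1 : μ ≤ 1) :
    Kc (y/x) ^ (min μ (1-μ)) * fw x y μ ≤ (1-μ)*x + μ*y := by
  rcases le_total μ (1/2) with hc | hc
  · rw [min_eq_left (by linarith)]
    exact base_half μ hx hy h0 hc
  · have hb := base_half (1-μ) hy hx (by linarith) (by linarith)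
    rw [min_eq_right (by linarith)]
    have e1 : Kc (x/y) = Kc (y/x) := by
      rw [show x/y = (y/x)⁻¹ by rw [inv_div], Kc_inv (by positivity)]
    have e2 : fw y x (1-μ) = fw x y μ := by
      unfold fw; rw [show 1-(1-μ) = μ by ring]; ring
    rw [e1, e2] at hb
    linarith

lemma mfl_zero {μ : ℝ} (h0 : 0 ≤ μ) (h1 : μ < 1) : mfl μ 0 = 0 := by
  have h : ⌊(2:ℝ)^(0:ℕ) * μ⌋ = 0 := by
    rw [pow_zero, one_mul]; exact Int.floor_eq_zero_iff.mpr ⟨h0, h1⟩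
  unfold mfl; rw [h]; norm_num

lemma YB_zero {x y : ℝ} (hx : 0 < x) (hy : 0 < y) :
    YB x y 0 0 = x - 2*(x*y)^((1:ℝ)/2) + y := by
  unfold YB fw
  rw [show (0:ℝ)/2^(0:ℕ) = 0 by norm_num, show (2*(0:ℝ)+1)/2^(0+1) = 1/2 by norm_num,
    show ((0:ℝ)+1)/2^(0:ℕ) = 1 by norm_num]
  rw [Real.rpow_zero, Real.rpow_one, mul_one, show (1:ℝ)-0 = 1 by norm_num,
    show (1:ℝ)-1 = 0 by norm_num, Real.rpow_zero, Real.rpow_one, one_mul,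
    show (1:ℝ) - 1/2 = 1/2 by norm_num, ← Real.mul_rpow hx.le hy.le]
  try ring

lemma hpow {t : ℝ} (ht : 0 ≤ t) (n : ℕ) :
    (t^((1:ℝ)/2))^((1:ℝ)/2^n) = t^((1:ℝ)/2^(n+1)) := by
  rw [← Real.rpow_mul ht]
  congr 1
  rw [pow_succ]; ring

lemma hdiv1 {x y : ℝ} (hx : 0 < x) (hy : 0 < y) :
    (x*y)^((1:ℝ)/2)/x = (y/x)^((1:ℝ)/2) := by
  have hu : x^((1:ℝ)/2) * x^((1:ℝ)/2) = x := by rw [← Real.rpow_add hx]; norm_num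
  rw [Real.mul_rpow hx.le hy.le, Real.div_rpow hy.le hx.le,
    div_eq_div_iff hx.ne' (ne_of_gt (by positivity))]
  linear_combination y ^ ((1:ℝ)/2) * hu

lemma hdiv2 {x y : ℝ} (hx : 0 < x) (hy : 0 < y) :
    y/((x*y)^((1:ℝ)/2)) = (y/x)^((1:ℝ)/2) := by
  have hv : y^((1:ℝ)/2) * y^((1:ℝ)/2) = y := by rw [← Real.rpow_add hy]; norm_num
  rw [Real.mul_rpow hx.le hy.le, Real.div_rpow hy.le hx.le,
    div_eq_div_iff (ne_of_gt (by positivity)) (ne_of_gt (by positivity))]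
  linear_combination (-(x ^ ((1:ℝ)/2))) * hv

lemma young (n : ℕ) : ∀ μ x y : ℝ, 0 < x → 0 < y → 0 ≤ μ → μ ≤ 1 →
    (∑ k ∈ Finset.range n, rseq μ k * YB x y (mfl μ k) k)
      + Kc ((y/x) ^ ((1:ℝ)/2^n)) ^ (rseq μ n) * fw x y μ ≤ (1-μ)*x + μ*y := by
  induction n with
  | zero =>
    intro μ x y hx hy h0 h1
    rw [Finset.range_zero, Finset.sum_empty, zero_add,
      show ((1:ℝ)/2^(0:ℕ)) = 1 by norm_num, Real.rpow_one]
    exact base μ hx hy h0 h1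
  | succ n ih =>
    intro μ x y hx hy h0 h1
    set z := (x*y)^((1:ℝ)/2) with hz
    have hzpos : 0 < z := by rw [hz]; positivity
    by_cases hμ1 : μ = 1
    · subst hμ1
      have hs : ∀ k ∈ Finset.range (n+1), rseq 1 k * YB x y (mfl 1 k) k = 0 := by
        intro k _; rw [rseq_one]; ring
      rw [Finset.sum_congr rfl hs, Finset.sum_const_zero, rseq_one, Real.rpow_zero,
        zero_add, one_mul]
      unfold fw
      rw [show (1:ℝ)-1 = 0 by norm_num, Real.rpow_zero, Real.rpow_one, one_mul]
      linarith
    have hμlt : μ < 1 := lt_of_le_of_ne h1 hμ1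
    have hm0 : mfl μ 0 = 0 := mfl_zero h0 hμlt
    rw [Finset.sum_range_succ']
    rcases le_or_gt μ (1/2) with hc | hc
    · -- case μ ≤ 1/2
      have hsum : (∑ k ∈ Finset.range n, rseq μ (k+1) * YB x y (mfl μ (k+1)) (k+1))
          = ∑ k ∈ Finset.range n, rseq (2*μ) k * YB x z (mfl (2*μ) k) k :=
        Finset.sum_congr rfl (fun k _ => by
          rw [rseq_double h0 hc k, ← mfl_double, ← YB_half hx hy, ← hz])
      have hK : (y/x) ^ ((1:ℝ)/2^(n+1)) = (z/x)^((1:ℝ)/2^n) := by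
        rw [hz, hdiv1 hx hy, hpow (by positivity)]
      have hfw : fw x y μ = fw x z (2*μ) := by
        rw [hz, fw_half hx hy, show 2*μ/2 = μ by ring]
      rw [hsum, hK, rseq_double h0 hc n, hfw, hm0, YB_zero hx hy, ← hz,
        show rseq μ 0 = μ from min_eq_left (by linarith)]
      have := ih (2*μ) x z hx hzpos (by linarith) (by linarith)
      nlinarith [this]
    · -- case 1/2 < μ
      have hsum : (∑ k ∈ Finset.range n, rseq μ (k+1) * YB x y (mfl μ (k+1)) (k+1))
          = ∑ k ∈ Finset.range n, rseq (2*μ-1) k * YB z y (mfl (2*μ-1) k) k :=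
        Finset.sum_congr rfl (fun k _ => by
          rw [rseq_double' hc.le h1 k,
            show mfl μ (k+1) = mfl (2*μ-1) k + 2^k by rw [mfl_double']; ring,
            ← YB_shift hx hy, ← hz])
      have hK : (y/x) ^ ((1:ℝ)/2^(n+1)) = (y/z)^((1:ℝ)/2^n) := by
        rw [hz, hdiv2 hx hy, hpow (by positivity)]
      have hfw : fw x y μ = fw z y (2*μ-1) := by
        rw [hz, fw_shift hx hy, show (2*μ-1+1)/2 = μ by ring]
      rw [hsum, hK, rseq_double' hc.le h1 n, hfw, hm0, YB_zero hx hy, ← hz,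
        show rseq μ 0 = 1-μ from min_eq_right (by linarith)]
      have := ih (2*μ-1) z y hzpos hy (by linarith) (by linarith)
      nlinarith [this]

lemma heinz (N : ℕ) (ν a b : ℝ) (ha : 0 < a) (hb : 0 < b) (hν0 : 0 < ν) (hν1 : ν < 1) :
    (∑ k ∈ Finset.range (N+1), rseq ν k * ((YB a b (mfl ν k) k + YB b a (mfl ν k) k)/2))
      + Kc ((b/a) ^ ((1:ℝ)/2^(N+1))) ^ (rseq ν (N+1)) * ((fw a b ν + fw b a ν)/2)
      ≤ (a+b)/2 := by
  set z := (a*b)^((1:ℝ)/2) with hz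
  have hzpos : 0 < z := by rw [hz]; positivity
  have hzz : (b*a)^((1:ℝ)/2) = z := by rw [hz, mul_comm b a]
  have hm0 : mfl ν 0 = 0 := mfl_zero hν0.le hν1
  have hKinv : Kc ((a/b) ^ ((1:ℝ)/2^(N+1))) = Kc ((b/a) ^ ((1:ℝ)/2^(N+1))) := by
    rw [show a/b = (b/a)⁻¹ from (inv_div b a).symm,
      Real.inv_rpow (by positivity), Kc_inv (by positivity)]
  rw [Finset.sum_range_succ']
  rcases le_or_gt ν (1/2) with hc | hc
  · -- ν ≤ 1/2
    have hsum : (∑ k ∈ Finset.range N,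
        rseq ν (k+1) * ((YB a b (mfl ν (k+1)) (k+1) + YB b a (mfl ν (k+1)) (k+1))/2))
        = ((∑ k ∈ Finset.range N, rseq (2*ν) k * YB a z (mfl (2*ν) k) k)
          + (∑ k ∈ Finset.range N, rseq (2*ν) k * YB b z (mfl (2*ν) k) k))/2 := by
      rw [← Finset.sum_add_distrib, Finset.sum_div]
      refine Finset.sum_congr rfl (fun k _ => ?_)
      rw [rseq_double hν0.le hc k, ← mfl_double, ← YB_half ha hb, ← YB_half hb ha,
        hzz, ← hz]
      ring
    have hKa : (b/a) ^ ((1:ℝ)/2^(N+1)) = (z/a)^((1:ℝ)/2^N) := by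
      rw [hz, hdiv1 ha hb, hpow (by positivity)]
    have hKb : Kc ((z/b)^((1:ℝ)/2^N)) = Kc ((b/a) ^ ((1:ℝ)/2^(N+1))) := by
      rw [← hzz, hdiv1 hb ha, hpow (by positivity), hKinv]
    have hfa : fw a z (2*ν) = fw a b ν := by
      rw [hz, fw_half ha hb, show 2*ν/2 = ν by ring]
    have hfb : fw b z (2*ν) = fw b a ν := by
      rw [← hzz, fw_half hb ha, show 2*ν/2 = ν by ring]
    have y1 := young N (2*ν) a z ha hzpos (by linarith) (by linarith)
    have y2 := young N (2*ν) b z hb hzpos (by linarith) (by linarith)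
    rw [← hKa, hfa, ← rseq_double hν0.le hc N] at y1
    rw [hKb, hfb, ← rseq_double hν0.le hc N] at y2
    rw [hsum, hm0, YB_zero ha hb, YB_zero hb ha, hzz, ← hz,
      show rseq ν 0 = ν from min_eq_left (by linarith)]
    nlinarith [y1, y2]
  · -- ν > 1/2
    have hsum : (∑ k ∈ Finset.range N,
        rseq ν (k+1) * ((YB a b (mfl ν (k+1)) (k+1) + YB b a (mfl ν (k+1)) (k+1))/2))
        = ((∑ k ∈ Finset.range N, rseq (2*ν-1) k * YB z b (mfl (2*ν-1) k) k)
          + (∑ k ∈ Finset.range N, rseq (2*ν-1) k * YB z a (mfl (2*ν-1) k) k))/2 := by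
      rw [← Finset.sum_add_distrib, Finset.sum_div]
      refine Finset.sum_congr rfl (fun k _ => ?_)
      rw [rseq_double' hc.le hν1.le k,
        show mfl ν (k+1) = mfl (2*ν-1) k + 2^k by rw [mfl_double']; ring,
        ← YB_shift ha hb, ← YB_shift hb ha, hzz, ← hz]
      ring
    have hKa : (b/a) ^ ((1:ℝ)/2^(N+1)) = (b/z)^((1:ℝ)/2^N) := by
      rw [hz, hdiv2 ha hb, hpow (by positivity)]
    have hKb : Kc ((a/z)^((1:ℝ)/2^N)) = Kc ((b/a) ^ ((1:ℝ)/2^(N+1))) := by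
      rw [← hzz, hdiv2 hb ha, hpow (by positivity), hKinv]
    have hfa : fw z b (2*ν-1) = fw a b ν := by
      rw [hz, fw_shift ha hb, show (2*ν-1+1)/2 = ν by ring]
    have hfb : fw z a (2*ν-1) = fw b a ν := by
      rw [← hzz, fw_shift hb ha, show (2*ν-1+1)/2 = ν by ring]
    have y1 := young N (2*ν-1) z b hzpos hb (by linarith) (by linarith)
    have y2 := young N (2*ν-1) z a hzpos ha (by linarith) (by linarith)
    rw [← hKa, hfa, ← rseq_double' hc.le hν1.le N] at y1
    rw [hKb, hfb, ← rseq_double' hc.le hν1.le N] at y2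
    rw [hsum, hm0, YB_zero ha hb, YB_zero hb ha, hzz, ← hz,
      show rseq ν 0 = 1-ν from min_eq_right (by linarith)]
    nlinarith [y1, y2]

theorem stmt16 (a b ν : ℝ) (ha : 0 < a) (hb : 0 < b) (hν : ν ∈ Set.Ioo (0:ℝ) 1)
    (n : ℕ) (hn : 1 ≤ n) (h : ℝ) (hh : h = b / a) (H : ℝ → ℝ)
    (hH : H = (fun μ : ℝ => (a ^ (1 - μ) * b ^ μ + a ^ μ * b ^ (1 - μ)) / 2)) :
    (a + b) / 2 ≤ Kc (h ^ ((1:ℝ)/2^n)) ^ (-(rseq ν n)) * H ν + (Real.sqrt a - Real.sqrt b)^2 - (∑ k ∈ Finset.range n, rseq ν k * (H (mfl ν k / 2^k) - 2 * H ((2 * mfl ν k + 1) / 2^(k+1)) + H ((mfl ν k + 1) / 2^k))) := by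
  obtain ⟨hν0, hν1⟩ := hν
  obtain ⟨N, rfl⟩ : ∃ N, n = N + 1 := ⟨n - 1, (Nat.succ_pred_eq_of_pos hn).symm⟩
  subst hh
  have Hval : ∀ μ : ℝ, H μ = (fw a b μ + fw b a μ)/2 := by
    intro μ; rw [hH]; unfold fw; ring
  have hsum_eq : ∀ k ∈ Finset.range (N+1),
      rseq ν k * (H (mfl ν k / 2^k) - 2 * H ((2 * mfl ν k + 1) / 2^(k+1)) + H ((mfl ν k + 1) / 2^k))
      = rseq ν k * ((YB a b (mfl ν k) k + YB b a (mfl ν k) k)/2) := by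
    intro k _
    rw [Hval, Hval, Hval]; unfold YB; ring
  rw [Finset.sum_congr rfl hsum_eq, Hval ν]
  set K := Kc ((b/a) ^ ((1:ℝ)/2^(N+1))) with hKdef
  have hKpos : 0 < K := Kc_pos (by positivity)
  set r := rseq ν (N+1) with hrdef
  set P := K ^ r with hPdef
  have hP : 0 < P := Real.rpow_pos_of_pos hKpos r
  have hPneg : K ^ (-r) = P⁻¹ := by rw [hPdef]; exact Real.rpow_neg hKpos.le r
  have hHei := heinz N ν a b ha hb hν0 hν1
  have hfa : 0 < fw a b ν := fw_pos ha hb ν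
  have hfb : 0 < fw b a ν := fw_pos hb ha ν
  have hgeom : fw a b ν * fw b a ν = a * b := by
    unfold fw
    rw [show a^(1-ν)*b^ν*(b^(1-ν)*a^ν) = (a^(1-ν)*a^ν)*(b^ν*b^(1-ν)) by ring,
      ← Real.rpow_add ha, ← Real.rpow_add hb, show 1-ν+ν = (1:ℝ) by ring,
      show ν+(1-ν) = (1:ℝ) by ring, Real.rpow_one, Real.rpow_one]
  have hG : Real.sqrt a * Real.sqrt b ≤ (fw a b ν + fw b a ν)/2 := by
    have h1 : Real.sqrt a * Real.sqrt b = Real.sqrt (fw a b ν) * Real.sqrt (fw b a ν) := by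
      rw [← Real.sqrt_mul ha.le, ← Real.sqrt_mul hfa.le, hgeom]
    rw [h1]
    nlinarith [sq_nonneg (Real.sqrt (fw a b ν) - Real.sqrt (fw b a ν)),
      Real.sq_sqrt hfa.le, Real.sq_sqrt hfb.le]
  have hsq : (Real.sqrt a - Real.sqrt b)^2 = a + b - 2*(Real.sqrt a * Real.sqrt b) := by
    rw [sub_sq, Real.sq_sqrt ha.le, Real.sq_sqrt hb.le]; ring
  have hPP : 2 ≤ P + P⁻¹ := by
    have hid : P*(P + P⁻¹) = P^2 + 1 := by field_simp
    nlinarith [sq_nonneg (P-1)]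
  have hmono : 0 ≤ (P + P⁻¹ - 2) * ((fw a b ν + fw b a ν)/2) :=
    mul_nonneg (by linarith) (by positivity)
  rw [hPneg, hsq]
  nlinarith [hHei, hG, hmono]
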